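/- Let R be a commutative ring and H a bialgebra over R with comultiplication Δ : H → H ⊗ H. Let c be an invertible element of H ⊗ H such that (i) the four elements c ⊗ 1, 1 ⊗ c, (Δ ⊗ id)(c), (id ⊗ Δ)(c) of H ⊗ H ⊗ H pairwise commute, and (ii) the element ∂c := (1 ⊗ c)·(id ⊗ Δ)(c)·((Δ ⊗ id)(c))^{−1}·(c ⊗ 1)^{−1} is central in H ⊗ H ⊗ H. Define the twisted comultiplication Δ_c(x) = c·Δ(x)·c^{−1}. Let E be an invertible element of H ⊗ H such that E·Δ_c(x) = Δ_c(x)·E for every x ∈ H, and put F = c^{−1}·E·c. Then (E ⊗ 1)·(Δ_c ⊗ id)(E) = (1 ⊗ E)·(id ⊗ Δ_c)(E) holds if and only if (F ⊗ 1)·(Δ ⊗ id)(F) = (1 ⊗ F)·(id ⊗ Δ)(F) holds. -/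

import Mathlib

open scoped TensorProduct

noncomputable section

variable (R H : Type*) [CommRing R] [Ring H] [Bialgebra R H]

/-- `Δ ⊗ id` as an algebra homomorphism `H ⊗ H → (H ⊗ H) ⊗ H`. -/
def deltaLeft : H ⊗[R] H →ₐ[R] (H ⊗[R] H) ⊗[R] H :=
  Algebra.TensorProduct.map (Bialgebra.comulAlgHom R H) (AlgHom.id R H)

/-- `id ⊗ Δ` as an algebra homomorphism `H ⊗ H → (H ⊗ H) ⊗ H`. -/
def deltaRight : H ⊗[R] H →ₐ[R] (H ⊗[R] H) ⊗[R] H :=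
  ((Algebra.TensorProduct.assoc R R R H H H).symm.toAlgHom).comp
    (Algebra.TensorProduct.map (AlgHom.id R H) (Bialgebra.comulAlgHom R H))

/-- `x ↦ x ⊗ 1` as an algebra homomorphism `H ⊗ H → (H ⊗ H) ⊗ H` (legs 1,2). -/
def leg12 : H ⊗[R] H →ₐ[R] (H ⊗[R] H) ⊗[R] H :=
  Algebra.TensorProduct.includeLeft

/-- `x ↦ 1 ⊗ x` as an algebra homomorphism `H ⊗ H → (H ⊗ H) ⊗ H` (legs 2,3). -/
def leg23 : H ⊗[R] H →ₐ[R] (H ⊗[R] H) ⊗[R] H :=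
  ((Algebra.TensorProduct.assoc R R R H H H).symm.toAlgHom).comp
    Algebra.TensorProduct.includeRight

-- abstract monoid lemma
lemma key {M : Type*} [Monoid M] (a a' b b' d d' e e' X Y DL DR : M)
    (haa : a * a' = 1) (ha'a : a' * a = 1)
    (hbb : b * b' = 1) (hb'b : b' * b = 1)
    (hdd : d * d' = 1) (hd'd : d' * d = 1)
    (hee : e * e' = 1) (he'e : e' * e = 1)
    (hXd : (a' * X * a) * d = d * (a' * X * a))
    (hYe : (b' * Y * b) * e = e * (b' * Y * b))
    (hu : ∀ z : M, z * (b * e * d' * a') = (b * e * d' * a') * z) :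
    (X * (a * DL * a') = Y * (b * DR * b')) ↔
      (a' * X * a * (d' * DL * d) = b' * Y * b * (e' * DR * e)) := by
  have ca : ∀ t, a * (a' * t) = t := fun t => by rw [← mul_assoc, haa, one_mul]
  have ca' : ∀ t, a' * (a * t) = t := fun t => by rw [← mul_assoc, ha'a, one_mul]
  have cb : ∀ t, b * (b' * t) = t := fun t => by rw [← mul_assoc, hbb, one_mul]
  have cb' : ∀ t, b' * (b * t) = t := fun t => by rw [← mul_assoc, hb'b, one_mul]
  have cd : ∀ t, d * (d' * t) = t := fun t => by rw [← mul_assoc, hdd, one_mul]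
  have cd' : ∀ t, d' * (d * t) = t := fun t => by rw [← mul_assoc, hd'd, one_mul]
  have ce : ∀ t, e * (e' * t) = t := fun t => by rw [← mul_assoc, hee, one_mul]
  have ce' : ∀ t, e' * (e * t) = t := fun t => by rw [← mul_assoc, he'e, one_mul]
  -- inverse-side commutes
  have hXd' : (a' * X * a) * d' = d' * (a' * X * a) := by
    have h2 : d * ((a' * X * a) * d') = a' * X * a := by
      rw [← mul_assoc, ← hXd, mul_assoc, hdd, mul_one]
    calc (a' * X * a) * d' = d' * (d * ((a' * X * a) * d')) := (cd' _).symm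
      _ = d' * (a' * X * a) := by rw [h2]
  have hYe' : (b' * Y * b) * e' = e' * (b' * Y * b) := by
    have h2 : e * ((b' * Y * b) * e') = b' * Y * b := by
      rw [← mul_assoc, ← hYe, mul_assoc, hee, mul_one]
    calc (b' * Y * b) * e' = e' * (e * ((b' * Y * b) * e')) := (ce' _).symm
      _ = e' * (b' * Y * b) := by rw [h2]
  set u : M := b * e * d' * a' with hu_def
  set u' : M := a * d * e' * b' with hu'_def
  have huu' : u * u' = 1 := by
    simp only [hu_def, hu'_def, mul_assoc, ca', cd', ce, hbb]
  have hbe_u : b * e = u * (a * d) := by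
    simp only [hu_def, mul_assoc, ca', cd, hd'd, mul_one]
  have he'b'_u : e' * b' = (d' * a') * u' := by
    simp only [hu'_def, mul_assoc, ca', cd', ca]
  have CONJ : ∀ w, b * e * w * (e' * b') = a * d * w * (d' * a') := by
    intro w
    have hz := hu (a * d * w * (d' * a'))
    calc b * e * w * (e' * b') = u * (a * d) * w * ((d' * a') * u') := by
          rw [hbe_u, he'b'_u]
      _ = u * (a * d * w * (d' * a')) * u' := by simp only [mul_assoc]
      _ = (a * d * w * (d' * a')) * u * u' := by rw [← hz]
      _ = a * d * w * (d' * a') := by rw [mul_assoc, huu', mul_one]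
  have step1 : a' * X * a * (d' * DL * d) = d' * (a' * X * a) * (DL * d) := by
    calc a' * X * a * (d' * DL * d) = (a' * X * a) * d' * (DL * d) := by
          simp only [mul_assoc]
      _ = d' * (a' * X * a) * (DL * d) := by rw [hXd']
  have step2 : b' * Y * b * (e' * DR * e) = e' * (b' * Y * b) * (DR * e) := by
    calc b' * Y * b * (e' * DR * e) = (b' * Y * b) * e' * (DR * e) := by
          simp only [mul_assoc]
      _ = e' * (b' * Y * b) * (DR * e) := by rw [hYe']
  have K1 : a * d * (a' * X * a * (d' * DL * d)) * (d' * a') = X * (a * DL * a') := by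
    rw [step1]
    simp only [mul_assoc, cd, ca, cd']
  have K2 : a * d * (b' * Y * b * (e' * DR * e)) * (d' * a') = Y * (b * DR * b') := by
    rw [← CONJ, step2]
    simp only [mul_assoc, ce, cb, ce']
  have hφ : ∀ w, d' * a' * (a * d * w * (d' * a')) * (a * d) = w := by
    intro w
    simp only [mul_assoc, ca', cd', ca, cd, ha'a, hd'd, mul_one, one_mul]
  constructor
  · intro L
    calc a' * X * a * (d' * DL * d)
        = d' * a' * (a * d * (a' * X * a * (d' * DL * d)) * (d' * a')) * (a * d) :=
          (hφ _).symm
      _ = d' * a' * (a * d * (b' * Y * b * (e' * DR * e)) * (d' * a')) * (a * d) := by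
          rw [K1, K2, L]
      _ = b' * Y * b * (e' * DR * e) := hφ _
  · intro Rh
    calc X * (a * DL * a') = a * d * (a' * X * a * (d' * DL * d)) * (d' * a') := K1.symm
      _ = a * d * (b' * Y * b * (e' * DR * e)) * (d' * a') := by rw [Rh]
      _ = Y * (b * DR * b') := K2

-- if F commutes with all Δ(x), then F ⊗ 1 commutes with (Δ ⊗ id)(y)
lemma comm12 (F : H ⊗[R] H)
    (hF : ∀ x : H, Commute F (Bialgebra.comulAlgHom R H x)) (y : H ⊗[R] H) :
    Commute (leg12 R H F) (deltaLeft R H y) := by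
  induction y using TensorProduct.induction_on with
  | zero => simpa using Commute.zero_right (leg12 R H F)
  | tmul x h =>
    show Commute (F ⊗ₜ[R] (1 : H)) ((Bialgebra.comulAlgHom R H x) ⊗ₜ[R] h)
    unfold Commute SemiconjBy
    rw [Algebra.TensorProduct.tmul_mul_tmul, Algebra.TensorProduct.tmul_mul_tmul,
      one_mul, mul_one, (hF x).eq]
  | add u v hu hv =>
    rw [map_add]
    exact hu.add_right hv

-- if F commutes with all Δ(x), then 1 ⊗ F commutes with (id ⊗ Δ)(y)
lemma comm23 (F : H ⊗[R] H)
    (hF : ∀ x : H, Commute F (Bialgebra.comulAlgHom R H x)) (y : H ⊗[R] H) :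
    Commute (leg23 R H F) (deltaRight R H y) := by
  have key : Commute ((Algebra.TensorProduct.includeRight : H ⊗[R] H →ₐ[R] H ⊗[R] (H ⊗[R] H)) F)
      ((Algebra.TensorProduct.map (AlgHom.id R H) (Bialgebra.comulAlgHom R H)) y) := by
    induction y using TensorProduct.induction_on with
    | zero => simpa using Commute.zero_right _
    | tmul h x =>
      show Commute ((1 : H) ⊗ₜ[R] F) (h ⊗ₜ[R] (Bialgebra.comulAlgHom R H x))
      unfold Commute SemiconjBy
      rw [Algebra.TensorProduct.tmul_mul_tmul, Algebra.TensorProduct.tmul_mul_tmul,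
        one_mul, mul_one, (hF x).eq]
    | add u v hu hv =>
      rw [map_add]
      exact hu.add_right hv
  exact key.map ((Algebra.TensorProduct.assoc R R R H H H).symm.toAlgHom : H ⊗[R] (H ⊗[R] H) →ₐ[R] (H ⊗[R] H) ⊗[R] H)

/-- An invariant 2-cochain `E` is a 2-cocycle for the twisted coproduct
`Δ_c = c Δ(·) c⁻¹` if and only if `F = c⁻¹ E c` is a 2-cocycle for `Δ`. -/
theorem stmt1 (c cinv E : H ⊗[R] H)
    (hc : c * cinv = 1) (hc' : cinv * c = 1) (hE : IsUnit E)
    -- (i) the four images of `c` in `H ⊗ H ⊗ H` pairwise commute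
    (h₁ : Commute (leg12 R H c) (leg23 R H c))
    (h₂ : Commute (leg12 R H c) (deltaLeft R H c))
    (h₃ : Commute (leg12 R H c) (deltaRight R H c))
    (h₄ : Commute (leg23 R H c) (deltaLeft R H c))
    (h₅ : Commute (leg23 R H c) (deltaRight R H c))
    (h₆ : Commute (deltaLeft R H c) (deltaRight R H c))
    -- (ii) `∂c = (1 ⊗ c)·(id ⊗ Δ)(c)·((Δ ⊗ id)(c))⁻¹·(c ⊗ 1)⁻¹` is central
    (hcent : ∀ z : (H ⊗[R] H) ⊗[R] H,
      Commute z (leg23 R H c * deltaRight R H c * deltaLeft R H cinv * leg12 R H cinv))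
    -- `E` commutes with `Δ_c(x)` for all `x`
    (hEinv : ∀ x : H,
      E * (c * Bialgebra.comulAlgHom R H x * cinv)
        = (c * Bialgebra.comulAlgHom R H x * cinv) * E) :
    -- `(E ⊗ 1)·(Δ_c ⊗ id)(E) = (1 ⊗ E)·(id ⊗ Δ_c)(E)`
    (leg12 R H E * (leg12 R H c * deltaLeft R H E * leg12 R H cinv)
        = leg23 R H E * (leg23 R H c * deltaRight R H E * leg23 R H cinv))
      ↔
    -- `(F ⊗ 1)·(Δ ⊗ id)(F) = (1 ⊗ F)·(id ⊗ Δ)(F)` for `F = c⁻¹ E c`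
    (leg12 R H (cinv * E * c) * deltaLeft R H (cinv * E * c)
        = leg23 R H (cinv * E * c) * deltaRight R H (cinv * E * c)) := by
  -- F = c⁻¹ E c commutes with every Δ(x)
  have hF : ∀ x : H, Commute (cinv * E * c) (Bialgebra.comulAlgHom R H x) := by
    intro x
    set D := Bialgebra.comulAlgHom R H x with hD
    have h1 : cinv * (E * (c * D * cinv)) * c = cinv * ((c * D * cinv) * E) * c := by
      rw [hEinv x]
    have hcc : ∀ t : H ⊗[R] H, cinv * (c * t) = t := fun t => by
      rw [← mul_assoc, hc', one_mul]
    have hcc' : ∀ t : H ⊗[R] H, c * (cinv * t) = t := fun t => by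
      rw [← mul_assoc, hc, one_mul]
    unfold Commute SemiconjBy
    calc (cinv * E * c) * D
        = cinv * (E * (c * D * cinv)) * c := by
          simp only [mul_assoc, hcc', hc', mul_one]
      _ = cinv * ((c * D * cinv) * E) * c := h1
      _ = D * (cinv * E * c) := by
          simp only [mul_assoc, hcc, hcc', hc', hc, mul_one]
  simp only [map_mul]
  refine key _ _ _ _ _ _ _ _ _ _ _ _ ?_ ?_ ?_ ?_ ?_ ?_ ?_ ?_ ?_ ?_
    (fun z => (hcent z).eq)
  · rw [← map_mul, hc, map_one]
  · rw [← map_mul, hc', map_one]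
  · rw [← map_mul, hc, map_one]
  · rw [← map_mul, hc', map_one]
  · rw [← map_mul, hc, map_one]
  · rw [← map_mul, hc', map_one]
  · rw [← map_mul, hc, map_one]
  · rw [← map_mul, hc', map_one]
  · have h := comm12 R H (cinv * E * c) hF c
    rw [map_mul, map_mul] at h
    exact h.eq
  · have h := comm23 R H (cinv * E * c) hF c
    rw [map_mul, map_mul] at h
    exact h.eq


end
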